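/- For any 2×2 unitary U, with P = diag(e^{iπ/3}, 1), the matrix A'(U) = U · P · U† · P · U satisfies |⟨1| A'(U) |0⟩| = |⟨1| U |0⟩|³. -/

import Mathlib

open Matrix Complex

theorem stmt_1 (U : Matrix (Fin 2) (Fin 2) ℂ)
    (hU : U ∈ Matrix.unitaryGroup (Fin 2) ℂ) :
    ‖(U * !![Complex.exp (Real.pi * Complex.I / 3), 0; 0, 1] * Uᴴ *
        !![Complex.exp (Real.pi * Complex.I / 3), 0; 0, 1] * U) 1 0‖
      = (‖U 1 0‖)^3 := by
  set ω : ℂ := Complex.exp (Real.pi * Complex.I / 3) with hωdef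
  have hω : ω ^ 2 = ω - 1 := by
    have h3 : (Real.pi : ℂ) * Complex.I / 3 = ((Real.pi / 3 : ℝ) : ℂ) * Complex.I := by
      push_cast; ring
    have hval : ω = (1/2 : ℂ) + ((Real.sqrt 3 : ℝ) : ℂ) / 2 * Complex.I := by
      rw [hωdef, h3, Complex.exp_mul_I, ← Complex.ofReal_cos, ← Complex.ofReal_sin,
        Real.cos_pi_div_three, Real.sin_pi_div_three]
      push_cast; ring
    have hs : ((Real.sqrt 3 : ℝ) : ℂ) ^ 2 = 3 := by
      norm_cast
      rw [Real.sq_sqrt]; norm_num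
    have hI : Complex.I ^ 2 = -1 := Complex.I_sq
    rw [hval]
    linear_combination (Complex.I ^ 2 / 4) * hs + (3/4 : ℂ) * hI
  have h1 := congrFun (congrFun hU.1 0) 0
  have h2 := congrFun (congrFun hU.2 1) 0
  have h3 := congrFun (congrFun hU.2 1) 1
  simp only [Matrix.mul_apply, Fin.sum_univ_two, Matrix.one_apply,
    Matrix.conjTranspose_apply, Matrix.star_apply] at h1 h2 h3 ⊢
  norm_num at h1 h2 h3 ⊢
  have key : (U 1 0 * ω * (starRingEnd ℂ) (U 0 0) + U 1 1 * (starRingEnd ℂ) (U 0 1)) * ω * U 0 0 +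
        (U 1 0 * ω * (starRingEnd ℂ) (U 1 0) + U 1 1 * (starRingEnd ℂ) (U 1 1)) * U 1 0
      = ω * (starRingEnd ℂ) (U 1 0) * (U 1 0) ^ 2 := by
    linear_combination (U 0 0 * (starRingEnd ℂ) (U 0 0) * U 1 0) * hω + (ω * U 0 0) * h2
      + U 1 0 * h3 - U 1 0 * h1
  rw [key]
  have habs : ‖ω‖ = 1 := by
    rw [hωdef, Complex.norm_exp]
    simp
  rw [norm_mul, norm_mul, habs, norm_pow, Complex.norm_conj]
  ring
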